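/- Let M be a finite nonempty set, H a hierarchy on M, and λ : Set M → ℝ a function which is strictly monotone on H with respect to strict inclusion (for all A, B ∈ H, A ⊊ B implies λ(A) < λ(B)) and which vanishes on singletons (λ({a}) = 0 for all a ∈ M). Define d(a,b) as the minimum of λ(B) over all B ∈ H containing both a and b. Then d is an ultrametric on M: d(a,a) = 0, d(a,b) = d(b,a), d(a,b) > 0 whenever a ≠ b, and d(a,c) ≤ max(d(a,b), d(b,c)) for all a, b, c ∈ M. -/
import Mathlib


/-- A strictly monotone function on a hierarchy vanishing on singletons induces an
ultrametric, by taking `d a b` to be the smallest value on a member containing both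
`a` and `b`. -/
theorem stmt13 (M : Type*) [Finite M] [Nonempty M] (H : Set (Set M))
    (h1 : ∅ ∉ H) (h2 : ∀ a : M, {a} ∈ H) (h3 : Set.univ ∈ H)
    (h4 : ∀ A ∈ H, ∀ B ∈ H, A ∩ B = ∅ ∨ A ⊆ B ∨ B ⊆ A)
    (lam : Set M → ℝ)
    (hmono : ∀ A ∈ H, ∀ B ∈ H, A ⊂ B → lam A < lam B)
    (hsing : ∀ a : M, lam {a} = 0) :
    let d : M → M → ℝ := fun a b => sInf (lam '' {B | B ∈ H ∧ a ∈ B ∧ b ∈ B})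
    (∀ a, d a a = 0) ∧ (∀ a b, d a b = d b a) ∧
      (∀ a b, a ≠ b → 0 < d a b) ∧
      (∀ a b c, d a c ≤ max (d a b) (d b c)) := by
  intro d
  have hfin : ∀ a b : M, (lam '' {B | B ∈ H ∧ a ∈ B ∧ b ∈ B}).Finite :=
    fun a b => Set.toFinite _
  have hne : ∀ a b : M, (lam '' {B | B ∈ H ∧ a ∈ B ∧ b ∈ B}).Nonempty :=
    fun a b => ⟨lam Set.univ, Set.univ, ⟨h3, trivial, trivial⟩, rfl⟩
  have hle : ∀ (a b : M) (C : Set M), C ∈ H → a ∈ C → b ∈ C → d a b ≤ lam C := by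
    intro a b C hC ha hb
    exact csInf_le (hfin a b).bddBelow ⟨C, ⟨hC, ha, hb⟩, rfl⟩
  have hmem : ∀ a b : M, ∃ B, B ∈ H ∧ a ∈ B ∧ b ∈ B ∧ lam B = d a b := by
    intro a b
    obtain ⟨B, hB, hlB⟩ := (hne a b).csInf_mem (hfin a b)
    exact ⟨B, hB.1, hB.2.1, hB.2.2, hlB⟩
  have hmono' : ∀ A ∈ H, ∀ B ∈ H, A ⊆ B → lam A ≤ lam B := by
    intro A hA B hB hsub
    rcases hsub.ssubset_or_eq with h | h
    · exact (hmono A hA B hB h).le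
    · exact le_of_eq (by rw [h])
  have hnonneg : ∀ B ∈ H, ∀ a : M, a ∈ B → 0 ≤ lam B := by
    intro B hB a ha
    rw [← hsing a]
    exact hmono' {a} (h2 a) B hB (Set.singleton_subset_iff.mpr ha)
  refine ⟨?_, ?_, ?_, ?_⟩
  · intro a
    refine le_antisymm ?_ ?_
    · calc d a a ≤ lam {a} := hle a a {a} (h2 a) rfl rfl
        _ = 0 := hsing a
    · apply le_csInf (hne a a)
      rintro x ⟨B, ⟨hB, ha, -⟩, rfl⟩
      exact hnonneg B hB a ha
  · intro a b
    have : {B | B ∈ H ∧ a ∈ B ∧ b ∈ B} = {B | B ∈ H ∧ b ∈ B ∧ a ∈ B} := by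
      ext B; simp only [Set.mem_setOf_eq]; tauto
    simp only [d, this]
  · intro a b hab
    obtain ⟨B, hB, haB, hbB, hlB⟩ := hmem a b
    rw [← hlB, ← hsing a]
    apply hmono {a} (h2 a) B hB
    constructor
    · exact Set.singleton_subset_iff.mpr haB
    · intro hsub
      exact hab (Set.mem_singleton_iff.mp (hsub hbB)).symm
  · intro a b c
    obtain ⟨B1, hB1, haB1, hbB1, hl1⟩ := hmem a b
    obtain ⟨B2, hB2, hbB2, hcB2, hl2⟩ := hmem b c
    rcases h4 B1 hB1 B2 hB2 with hdisj | hsub | hsub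
    · exfalso
      have : b ∈ B1 ∩ B2 := ⟨hbB1, hbB2⟩
      rw [hdisj] at this
      exact this
    · calc d a c ≤ lam B2 := hle a c B2 hB2 (hsub haB1) hcB2
        _ = d b c := hl2
        _ ≤ max (d a b) (d b c) := le_max_right _ _
    · calc d a c ≤ lam B1 := hle a c B1 hB1 haB1 (hsub hcB2)
        _ = d a b := hl1
        _ ≤ max (d a b) (d b c) := le_max_left _ _
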